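/- Let V be a finite-dimensional vector space over a perfect field of characteristic 2 with nondegenerate reflexive bilinear form ξ whose isotropic vectors form a hyperplane H, and let L₁, L₂ be distinct regular 2-dimensional subspaces with L₁ ∩ L₂ = span(p) for a nonzero p ∉ H. Then the 3-dimensional subspace A = L₁ + L₂ is non-regular if and only if (L₁ ∩ H) ⊥ (L₂ ∩ H). -/

import Mathlib

private lemma aux_line {F V : Type*} [Field F] [AddCommGroup V] [Module F V]
    [FiniteDimensional F V] (H : Submodule F V)
    (hHhyp : Module.finrank F H + 1 = Module.finrank F V)
    (L : Submodule F V) (hL2 : Module.finrank F L = 2)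
    {p : V} (hpH : p ∉ H) (hpL : p ∈ L) :
    ∃ q, q ∈ L ∧ q ∈ H ∧ q ≠ 0 ∧ L = Submodule.span F {p, q} := by
  have h1 : L ⊓ H ≠ ⊥ := by
    intro h
    have hkey := Submodule.finrank_sup_add_finrank_inf_eq L H
    rw [h, finrank_bot, hL2] at hkey
    have h2 : Module.finrank F ↥(L ⊔ H) ≤ Module.finrank F V :=
      Submodule.finrank_le _
    omega
  obtain ⟨q, hqLH, hq0⟩ := Submodule.exists_mem_ne_zero_of_ne_bot h1
  refine ⟨q, hqLH.1, hqLH.2, hq0, ?_⟩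
  have hle : Submodule.span F {p, q} ≤ L := by
    rw [Submodule.span_le]
    rintro x (rfl | rfl)
    · exact hpL
    · exact hqLH.1
  have hinf : (Submodule.span F {p}) ⊓ (Submodule.span F {q}) = ⊥ := by
    rw [eq_bot_iff]
    rintro x ⟨hx1, hx2⟩
    obtain ⟨a, rfl⟩ := Submodule.mem_span_singleton.mp hx1
    obtain ⟨b, hb⟩ := Submodule.mem_span_singleton.mp hx2
    rw [Submodule.mem_bot]
    by_contra hx0
    have ha : a ≠ 0 := by rintro rfl; simp at hx0
    apply hpH
    have : p = (a⁻¹ * b) • q := by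
      rw [mul_smul, hb, smul_smul, inv_mul_cancel₀ ha, one_smul]
    rw [this]
    exact Submodule.smul_mem _ _ hqLH.2
  have hrank : Module.finrank F (Submodule.span F ({p, q} : Set V)) = 2 := by
    have : ({p, q} : Set V) = insert p {q} := rfl
    rw [this, Submodule.span_insert]
    have := Submodule.finrank_sup_add_finrank_inf_eq (Submodule.span F {p})
      (Submodule.span F {q})
    rw [hinf, finrank_bot, finrank_span_singleton (show p ≠ 0 by
      rintro rfl; exact hpH (Submodule.zero_mem H)),
      finrank_span_singleton hq0] at this
    omega
  exact (Submodule.eq_of_le_of_finrank_le hle (by rw [hrank, hL2])).symm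

open LinearMap.BilinForm in
/-- For distinct regular lines L₁, L₂ meeting in a regular point p, the plane
A = L₁ + L₂ is nonregular iff (L₁ ∩ H) ⊥ (L₂ ∩ H). -/
theorem stmt19 {F V : Type*} [Field F] [AddCommGroup V] [Module F V]
    [FiniteDimensional F V] [CharP F 2] [PerfectField F]
    (ξ : LinearMap.BilinForm F V) (hnd : ξ.Nondegenerate) (hrefl : ξ.IsRefl)
    (H : Submodule F V) (hH : ∀ v : V, ξ v v = 0 ↔ v ∈ H)
    (hHhyp : Module.finrank F H + 1 = Module.finrank F V)
    (L₁ L₂ : Submodule F V) (hL₁2 : Module.finrank F L₁ = 2)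
    (hL₂2 : Module.finrank F L₂ = 2) (hne : L₁ ≠ L₂)
    (hL₁reg : L₁ ⊓ ξ.orthogonal L₁ = ⊥) (hL₂reg : L₂ ⊓ ξ.orthogonal L₂ = ⊥)
    (p : V) (hp : p ≠ 0) (hpH : p ∉ H)
    (hmeet : L₁ ⊓ L₂ = Submodule.span F {p}) :
    (L₁ ⊔ L₂) ⊓ ξ.orthogonal (L₁ ⊔ L₂) ≠ ⊥ ↔
      ∀ x ∈ L₁ ⊓ H, ∀ y ∈ L₂ ⊓ H, ξ x y = 0 := by
  classical
  have h2F : (2 : F) = 0 := by exact_mod_cast CharP.cast_eq_zero F 2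
  have hpmeet : p ∈ L₁ ⊓ L₂ := by
    rw [hmeet]; exact Submodule.mem_span_singleton_self p
  obtain ⟨q₁, hq₁L, hq₁H, hq₁0, hspan₁⟩ := aux_line H hHhyp L₁ hL₁2 hpH hpmeet.1
  obtain ⟨q₂, hq₂L, hq₂H, hq₂0, hspan₂⟩ := aux_line H hHhyp L₂ hL₂2 hpH hpmeet.2
  have hqq1 : ξ q₁ q₁ = 0 := (hH q₁).mpr hq₁H
  have hqq2 : ξ q₂ q₂ = 0 := (hH q₂).mpr hq₂H
  -- elements of L ⊓ H are multiples of q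
  have hmul : ∀ (L : Submodule F V) (q : V), q ∈ H → L = Submodule.span F {p, q} →
      ∀ x ∈ L ⊓ H, ∃ b : F, x = b • q := by
    rintro L q hqH hspan x ⟨hxL, hxH⟩
    rw [hspan] at hxL
    obtain ⟨a, b, hab⟩ := Submodule.mem_span_pair.mp hxL
    have haH : a • p ∈ H := by
      have h : a • p = x - b • q := by rw [← hab]; abel
      rw [h]; exact Submodule.sub_mem _ hxH (Submodule.smul_mem _ _ hqH)
    have ha : a = 0 := by
      by_contra ha
      apply hpH
      have : p = a⁻¹ • (a • p) := by rw [smul_smul, inv_mul_cancel₀ ha, one_smul]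
      rw [this]; exact Submodule.smul_mem _ _ haH
    exact ⟨b, by rw [← hab, ha, zero_smul, zero_add]⟩
  -- ξ p q_i ≠ 0 from regularity
  have hb : ∀ (L : Submodule F V) (q : V), q ∈ L → q ∈ H → q ≠ 0 →
      L = Submodule.span F {p, q} → L ⊓ ξ.orthogonal L = ⊥ → ξ p q ≠ 0 := by
    intro L q hqL hqH hq0 hspan hreg hpq
    apply hq0
    have hmem : q ∈ L ⊓ ξ.orthogonal L := by
      refine ⟨hqL, ?_⟩
      intro n hn
      rw [hspan] at hn
      obtain ⟨a, b, hab⟩ := Submodule.mem_span_pair.mp hn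
      have hqq : ξ q q = 0 := (hH q).mpr hqH
      rw [← hab]
      rw [LinearMap.BilinForm.add_left, LinearMap.BilinForm.smul_left,
        LinearMap.BilinForm.smul_left, hpq, hqq]
      ring
    rwa [hreg, Submodule.mem_bot] at hmem
  have hb₁ : ξ p q₁ ≠ 0 := hb L₁ q₁ hq₁L hq₁H hq₁0 hspan₁ hL₁reg
  have hb₂ : ξ p q₂ ≠ 0 := hb L₂ q₂ hq₂L hq₂H hq₂0 hspan₂ hL₂reg
  -- q₂ is not a multiple of q₁
  have hind : ∀ c : F, q₂ ≠ c • q₁ := by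
    intro c hc
    have hq₂L₁ : q₂ ∈ L₁ := hc ▸ Submodule.smul_mem _ _ hq₁L
    have hmem : q₂ ∈ Submodule.span F {p} := by
      rw [← hmeet]; exact ⟨hq₂L₁, hq₂L⟩
    obtain ⟨d, hd⟩ := Submodule.mem_span_singleton.mp hmem
    have hd0 : d ≠ 0 := by rintro rfl; rw [zero_smul] at hd; exact hq₂0 hd.symm
    apply hpH
    have : p = d⁻¹ • q₂ := by rw [← hd, smul_smul, inv_mul_cancel₀ hd0, one_smul]
    rw [this]; exact Submodule.smul_mem _ _ hq₂H
  constructor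
  · -- nonregular → orthogonality condition
    intro hA
    obtain ⟨v, hvmem, hv0⟩ := Submodule.exists_mem_ne_zero_of_ne_bot hA
    obtain ⟨hvA, hvorth⟩ := hvmem
    have hvH : v ∈ H := (hH v).mp (hvorth v hvA)
    obtain ⟨u₁, hu₁, u₂, hu₂, huv⟩ := Submodule.mem_sup.mp hvA
    rw [hspan₁] at hu₁; rw [hspan₂] at hu₂
    obtain ⟨a₁, c₁, h1⟩ := Submodule.mem_span_pair.mp hu₁
    obtain ⟨a₂, c₂, h2⟩ := Submodule.mem_span_pair.mp hu₂
    have hv : v = (a₁ + a₂) • p + c₁ • q₁ + c₂ • q₂ := by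
      rw [← huv, ← h1, ← h2, add_smul]; abel
    have haH : (a₁ + a₂) • p ∈ H := by
      have h : (a₁ + a₂) • p = v - c₁ • q₁ - c₂ • q₂ := by rw [hv]; abel
      rw [h]
      exact Submodule.sub_mem _ (Submodule.sub_mem _ hvH
        (Submodule.smul_mem _ _ hq₁H)) (Submodule.smul_mem _ _ hq₂H)
    have ha : a₁ + a₂ = 0 := by
      by_contra ha
      apply hpH
      have h : p = (a₁ + a₂)⁻¹ • ((a₁ + a₂) • p) := by
        rw [smul_smul, inv_mul_cancel₀ ha, one_smul]
      rw [h]; exact Submodule.smul_mem _ _ haH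
    have hv' : v = c₁ • q₁ + c₂ • q₂ := by rw [hv, ha, zero_smul, zero_add]
    have hd : ξ q₁ q₂ = 0 := by
      by_contra hd
      have he : ξ q₂ q₁ ≠ 0 := fun h => hd (hrefl _ _ h)
      have h3 : ξ q₁ v = 0 := hvorth q₁ (Submodule.mem_sup_left hq₁L)
      have h4 : ξ q₂ v = 0 := hvorth q₂ (Submodule.mem_sup_right hq₂L)
      rw [hv', LinearMap.BilinForm.add_right, LinearMap.BilinForm.smul_right,
        LinearMap.BilinForm.smul_right, hqq1, mul_zero, zero_add] at h3
      rw [hv', LinearMap.BilinForm.add_right, LinearMap.BilinForm.smul_right,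
        LinearMap.BilinForm.smul_right, hqq2, mul_zero, add_zero] at h4
      have hc₂ : c₂ = 0 := by
        rcases mul_eq_zero.mp h3 with h | h
        · exact h
        · exact absurd h hd
      have hc₁ : c₁ = 0 := by
        rcases mul_eq_zero.mp h4 with h | h
        · exact h
        · exact absurd h he
      exact hv0 (by rw [hv', hc₁, hc₂, zero_smul, zero_smul, add_zero])
    intro x hx y hy
    obtain ⟨s, rfl⟩ := hmul L₁ q₁ hq₁H hspan₁ x hx
    obtain ⟨t, rfl⟩ := hmul L₂ q₂ hq₂H hspan₂ y hy
    rw [LinearMap.BilinForm.smul_left, LinearMap.BilinForm.smul_right, hd]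
    ring
  · -- orthogonality condition → nonregular
    intro hcond
    have hd : ξ q₁ q₂ = 0 := hcond q₁ ⟨hq₁L, hq₁H⟩ q₂ ⟨hq₂L, hq₂H⟩
    have he : ξ q₂ q₁ = 0 := hrefl _ _ hd
    set v := ξ p q₂ • q₁ + ξ p q₁ • q₂ with hvdef
    have hv0 : v ≠ 0 := by
      intro h
      apply hind ((ξ p q₁)⁻¹ * (-(ξ p q₂)))
      have h' : ξ p q₁ • q₂ = -(ξ p q₂) • q₁ := by
        rw [neg_smul, eq_neg_iff_add_eq_zero, add_comm]; exact h
      rw [mul_smul]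
      rw [← h', smul_smul, inv_mul_cancel₀ hb₁, one_smul]
    rw [Submodule.ne_bot_iff]
    refine ⟨v, ⟨?_, ?_⟩, hv0⟩
    · exact Submodule.add_mem _
        (Submodule.smul_mem _ _ (Submodule.mem_sup_left hq₁L))
        (Submodule.smul_mem _ _ (Submodule.mem_sup_right hq₂L))
    · intro n hn
      obtain ⟨u₁, hu₁, u₂, hu₂, hnval⟩ := Submodule.mem_sup.mp hn
      rw [hspan₁] at hu₁; rw [hspan₂] at hu₂
      obtain ⟨a₁, c₁, h1⟩ := Submodule.mem_span_pair.mp hu₁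
      obtain ⟨a₂, c₂, h2⟩ := Submodule.mem_span_pair.mp hu₂
      rw [← hnval, ← h1, ← h2, hvdef]
      simp only [LinearMap.BilinForm.add_left, LinearMap.BilinForm.add_right,
        LinearMap.BilinForm.smul_left, LinearMap.BilinForm.smul_right,
        hqq1, hqq2, hd, he, mul_zero, add_zero, zero_add]
      ring_nf
      linear_combination ((a₁ + a₂) * (ξ p q₂ * ξ p q₁)) * h2F
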